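/- arXiv:1112.5383 — 4 statements merged into one kernel-verified Lean document; each statement's English description precedes it below -/
import Mathlib

section
/- Let n ≥ 3 and let λ, ν be partitions of n+1 with ν ≠ λ. If every partition obtained from ν by removing one box can also be obtained from λ by removing one box, then ν is rectangular (all nonzero parts of ν are equal). -/
/-- A partition, encoded as a weakly decreasing function `ℕ → ℕ` that is eventually zero. -/
def IsPartition (f : ℕ → ℕ) : Prop :=
  Antitone f ∧ ∃ N, ∀ i, N ≤ i → f i = 0

/-- The size of a partition: the sum of its parts. -/
noncomputable def psize (f : ℕ → ℕ) : ℕ := ∑ᶠ i, f i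

/-- `g` is obtained from `f` by removing one box: `g` is again a partition and
agrees with `f` except in one row where it is one less. -/
def RemoveBox (f g : ℕ → ℕ) : Prop :=
  IsPartition g ∧ ∃ i, f i = g i + 1 ∧ ∀ j, j ≠ i → f j = g j

/-- All nonzero parts are equal. -/
def Rectangular (f : ℕ → ℕ) : Prop :=
  ∀ i j, f i ≠ 0 → f j ≠ 0 → f i = f j

/-- Removing a box at a corner (a strict descent) yields a partition. -/
lemma removeBox_corner (nu : ℕ → ℕ) (hnu : IsPartition nu) (c : ℕ)
    (hc : nu (c + 1) < nu c) :
    RemoveBox nu (fun x => if x = c then nu c - 1 else nu x) := by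
  obtain ⟨hmono, N, hN⟩ := hnu
  refine ⟨⟨?_, ⟨max N (c + 1), ?_⟩⟩, c, ?_, ?_⟩
  · intro x y hxy
    have h1 : nu y ≤ nu x := hmono hxy
    dsimp only
    split_ifs with hy hx hx
    · omega
    · rw [hy] at h1
      omega
    · rw [hx] at hxy
      have h2 := hmono (show c + 1 ≤ y by omega)
      omega
    · exact h1
  · intro i hi
    have h1 : i ≠ c := by omega
    simp only [if_neg h1]
    exact hN i (le_trans (le_max_left _ _) hi)
  · show nu c = (if c = c then nu c - 1 else nu c) + 1
    rw [if_pos rfl]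
    omega
  · intro j hj
    show nu j = if j = c then nu c - 1 else nu j
    rw [if_neg hj]

/-- If `n ≥ 3`, `λ ≠ ν` are partitions of `n+1` and every partition obtained from `ν`
by removing one box is also obtained from `λ` by removing one box, then `ν` is rectangular. -/
theorem stmt1 (n : ℕ) (hn : 3 ≤ n) (lam nu : ℕ → ℕ)
    (hlam : IsPartition lam) (hnu : IsPartition nu)
    (hslam : psize lam = n + 1) (hsnu : psize nu = n + 1) (hne : nu ≠ lam)
    (h : ∀ g, RemoveBox nu g → RemoveBox lam g) :
    Rectangular nu := by
  intro i j hi hj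
  by_contra hneq
  obtain ⟨hmono, N, hN⟩ := id hnu
  -- get a, b with nu b < nu a and nu b ≠ 0
  obtain ⟨a, b, hab, hb0⟩ : ∃ a b, nu b < nu a ∧ nu b ≠ 0 := by
    rcases Nat.lt_or_ge (nu i) (nu j) with h1 | h1
    · exact ⟨j, i, h1, hi⟩
    · exact ⟨i, j, lt_of_le_of_ne h1 (Ne.symm hneq), hj⟩
  -- first corner r: last index with value ≥ nu a
  have hex : ∃ s, nu s < nu a := ⟨b, hab⟩
  set s := Nat.find hex with hs
  have hsspec : nu s < nu a := Nat.find_spec hex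
  have hsmin : ∀ t, t < s → nu a ≤ nu t := fun t ht => not_lt.1 (Nat.find_min hex ht)
  have hs0 : s ≠ 0 := by
    intro h0
    have := hmono (Nat.zero_le a)
    rw [h0] at hsspec
    omega
  have hsb : s ≤ b := Nat.find_le hab
  set r := s - 1 with hr
  have hrs : r + 1 = s := by omega
  have hcorner : nu (r + 1) < nu r := by
    have h1 := hsmin r (by omega)
    rw [hrs]
    omega
  have hr1pos : nu (r + 1) ≠ 0 := by
    rw [hrs]
    have := hmono hsb
    omega
  -- second corner M : last nonzero index
  set M := Nat.findGreatest (fun t => nu t ≠ 0) N with hM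
  have hMle : ∀ t, nu t ≠ 0 → t ≤ M := by
    intro t ht
    by_contra hgt
    push_neg at hgt
    rcases le_or_gt t N with h' | h'
    · exact (Nat.findGreatest_is_greatest hgt h') ht
    · exact ht (hN t h'.le)
  have hr1N : r + 1 ≤ N := by
    by_contra hcon
    push_neg at hcon
    exact hr1pos (hN _ (by omega))
  have hM0 : nu M ≠ 0 := by
    rw [hM]
    exact Nat.findGreatest_spec (P := fun t => nu t ≠ 0) hr1N hr1pos
  have hrM : r ≠ M := by
    have := hMle (r + 1) hr1pos
    omega
  have hM1 : nu (M + 1) = 0 := by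
    by_contra hcon
    have := hMle (M + 1) hcon
    omega
  have hcornerM : nu (M + 1) < nu M := by omega
  -- apply the hypothesis to the two removals
  obtain ⟨-, k, hk1, hk2⟩ := h _ (removeBox_corner nu hnu r hcorner)
  obtain ⟨-, m, hm1, hm2⟩ := h _ (removeBox_corner nu hnu M hcornerM)
  -- k ≠ r, else lam = nu
  have hkr : k ≠ r := by
    intro hkr
    subst hkr
    apply hne
    funext x
    simp only [if_pos rfl] at hk1
    rw [if_true] at hk1
    by_cases hx : x = r
    · rw [hx, hk1]
      omega
    · rw [hk2 x hx]
      simp [hx]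
  have e1 : lam r = nu r - 1 := by
    rw [hk2 r (fun hh => hkr hh.symm)]
    simp
  have e2 : nu r ≤ lam r := by
    by_cases hrm : r = m
    · rw [← hrm] at hm1
      rw [hm1]
      simp [hrM]
    · rw [hm2 r hrm]
      simp [hrM]
  omega
end

section
/- The d-core of a partition is well defined: if λ is a partition and any maximal sequence of removals of d-hooks is performed (repeatedly removing rim d-hooks until no cell has hook length d), the resulting partition is independent of the choice of removals. -/
/-- `X` is the β-set of size `s` of the partition `f`. -/
def HasBetaSet (f : ℕ → ℕ) (s : ℕ) (X : Finset ℕ) : Prop :=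
  IsPartition f ∧ (∀ i, s ≤ i → f i = 0) ∧
    X = (Finset.range s).image (fun i => f i + (s - 1 - i))

/-- Removal of a rim `d`-hook, on β-sets: replace some `x ∈ X` with `x ≥ d`,
`x - d ∉ X`, by `x - d`. -/
def HookStep (d : ℕ) (X Y : Finset ℕ) : Prop :=
  ∃ x ∈ X, d ≤ x ∧ x - d ∉ X ∧ Y = insert (x - d) (X.erase x)

/-- A hook step preserves the number of elements in each residue class mod `d`. -/
lemma hookStep_filter_card (d : ℕ) {X Y : Finset ℕ} (h : HookStep d X Y) (r : ℕ) :
    (Y.filter (fun x => x % d = r)).card = (X.filter (fun x => x % d = r)).card := by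
  obtain ⟨x, hx, hdx, hnd, rfl⟩ := h
  have hmod : (x - d) % d = x % d := by
    conv_rhs => rw [show x = (x - d) + d by omega]
    simp [Nat.add_mod_right]
  by_cases hp : x % d = r
  · rw [Finset.filter_insert]
    rw [if_pos (by simp [hmod, hp])]
    rw [Finset.filter_erase]
    have hxd : x - d ∉ (X.filter (fun x => x % d = r)).erase x := by
      intro hc
      exact hnd (Finset.mem_of_mem_filter _ (Finset.mem_of_mem_erase hc))
    rw [Finset.card_insert_of_notMem hxd]
    have hxmem : x ∈ X.filter (fun x => x % d = r) := Finset.mem_filter.mpr ⟨hx, hp⟩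
    rw [Finset.card_erase_of_mem hxmem]
    have : 1 ≤ (X.filter (fun x => x % d = r)).card := Finset.card_pos.mpr ⟨x, hxmem⟩
    omega
  · rw [Finset.filter_insert]
    rw [if_neg (by simp [hmod, hp])]
    rw [Finset.filter_erase]
    rw [Finset.erase_eq_of_notMem (by simp [hp])]

lemma rtg_filter_card (d : ℕ) {X Z : Finset ℕ}
    (h : Relation.ReflTransGen (HookStep d) X Z) (r : ℕ) :
    (Z.filter (fun x => x % d = r)).card = (X.filter (fun x => x % d = r)).card := by
  induction h with
  | refl => rfl
  | tail _ hstep ih => rw [hookStep_filter_card d hstep r, ih]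

/-- A downward-closed finset of naturals is an initial segment. -/
lemma downward_eq_range (J : Finset ℕ) (h : ∀ k ∈ J, ∀ j ≤ k, j ∈ J) :
    J = Finset.range J.card := by
  have hsub : J ⊆ Finset.range J.card := by
    intro k hk
    have hsub' : Finset.range (k + 1) ⊆ J := by
      intro j hj
      have hjk : j < k + 1 := Finset.mem_range.mp hj
      exact h k hk j (by omega)
    have := Finset.card_le_card hsub'
    simp only [Finset.card_range] at this
    exact Finset.mem_range.mpr (by omega)
  exact Finset.eq_of_subset_of_card_le hsub (by simp)

/-- At a terminal β-set, each residue class is the canonical initial segment. -/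
lemma terminal_filter_eq (d : ℕ) (Z : Finset ℕ) (t : ∀ W, ¬ HookStep d Z W)
    (r : ℕ) (hr : r < d) :
    Z.filter (fun x => x % d = r) =
      (Finset.range ((Z.filter (fun x => x % d = r)).card)).image (fun j => d * j + r) := by
  have hclosed : ∀ x ∈ Z, d ≤ x → x - d ∈ Z := by
    intro x hx hdx
    by_contra hc
    exact t _ ⟨x, hx, hdx, hc, rfl⟩
  set S := Z.filter (fun x => x % d = r) with hS
  have hSmem : ∀ x ∈ S, x ∈ Z ∧ x % d = r := fun x hx => Finset.mem_filter.mp hx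
  have hrepr : ∀ x ∈ S, x = d * (x / d) + r := by
    intro x hx
    have := (hSmem x hx).2
    have := Nat.div_add_mod x d
    omega
  set J := S.image (fun x => x / d) with hJ
  have hinj : Set.InjOn (fun x => x / d) S := by
    intro a ha b hb hab
    have h1 := hrepr a ha
    have h2 := hrepr b hb
    simp only at hab
    rw [hab] at h1
    omega
  have hJcard : J.card = S.card := Finset.card_image_of_injOn hinj
  have hstep : ∀ k, k + 1 ∈ J → k ∈ J := by
    intro k hk
    obtain ⟨x, hx, hxk⟩ := Finset.mem_image.mp hk
    have hxr := hrepr x hx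
    rw [hxk, Nat.mul_succ] at hxr
    have hdx : d ≤ x := by omega
    have hxZ : x - d ∈ Z := hclosed x (hSmem x hx).1 hdx
    have hxd2 : x - d = d * k + r := by omega
    have hmod : (x - d) % d = r := by
      rw [hxd2]
      simp [Nat.mul_add_mod, Nat.mod_eq_of_lt hr]
    have hmem : x - d ∈ S := by rw [hS]; exact Finset.mem_filter.mpr ⟨hxZ, hmod⟩
    refine Finset.mem_image.mpr ⟨x - d, hmem, ?_⟩
    have hq := hrepr (x - d) hmem
    have hdpos : 0 < d := by omega
    have : d * ((x - d) / d) = d * k := by omega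
    exact Nat.eq_of_mul_eq_mul_left hdpos this
  have hdown : ∀ k ∈ J, ∀ j ≤ k, j ∈ J := by
    intro k
    induction k with
    | zero => intro hk j hj; simpa [Nat.le_zero.mp hj] using hk
    | succ n ih =>
      intro hk j hj
      rcases Nat.lt_or_ge j (n + 1) with h' | h'
      · exact ih (hstep n hk) j (by omega)
      · have : j = n + 1 := by omega
        rwa [this]
  have hJr : J = Finset.range J.card := downward_eq_range J hdown
  have hSJ : S = J.image (fun j => d * j + r) := by
    apply Finset.ext
    intro y
    constructor
    · intro hy
      refine Finset.mem_image.mpr ⟨y / d, Finset.mem_image.mpr ⟨y, hy, rfl⟩, ?_⟩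
      exact (hrepr y hy).symm
    · intro hy
      obtain ⟨j, hj, hjy⟩ := Finset.mem_image.mp hy
      obtain ⟨x, hx, hxj⟩ := Finset.mem_image.mp hj
      have hx' := hrepr x hx
      rw [hxj] at hx'
      have : y = x := by omega
      rwa [this]
  conv_lhs => rw [hSJ, hJr, hJcard]

/-- A β-set of given size determines the partition. -/
lemma betaSet_unique (s : ℕ) (Z : Finset ℕ) (g₁ g₂ : ℕ → ℕ)
    (h1 : HasBetaSet g₁ s Z) (h2 : HasBetaSet g₂ s Z) : g₁ = g₂ := by
  obtain ⟨⟨ha1, -⟩, hz1, hX1⟩ := h1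
  obtain ⟨⟨ha2, -⟩, hz2, hX2⟩ := h2
  have anti : ∀ (g : ℕ → ℕ), Antitone g → ∀ i j, i < j → j < s →
      g j + (s - 1 - j) < g i + (s - 1 - i) := by
    intro g hg i j hij hjs
    have := hg (le_of_lt hij)
    omega
  have hcard : Z.card = s := by
    rw [hX1, Finset.card_image_of_injOn, Finset.card_range]
    intro a ha b hb hab
    simp only [Finset.coe_range, Set.mem_Iio] at ha hb
    simp only at hab
    rcases Nat.lt_trichotomy a b with h' | h' | h'
    · have := anti g₁ ha1 a b h' hb; omega
    · exact h'
    · have := anti g₁ ha1 b a h' ha; omega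
  have main : ∀ (g : ℕ → ℕ), Antitone g →
      Z = (Finset.range s).image (fun i => g i + (s - 1 - i)) →
      ∀ i, ∀ his : i < s, g i + (s - 1 - i)
        = Z.orderEmbOfFin hcard ⟨s - 1 - i, by omega⟩ := by
    intro g hg hXg i his
    set e : Fin s → ℕ := fun j => g (s - 1 - j.val) + (s - 1 - (s - 1 - j.val)) with he
    have hmono : StrictMono e := by
      intro a b hab
      have ha' := a.isLt
      have hb' := b.isLt
      exact anti g hg (s - 1 - b.val) (s - 1 - a.val) (by omega) (by omega)
    have hmem : ∀ j, e j ∈ Z := by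
      intro j
      have hj' := j.isLt
      rw [hXg]
      exact Finset.mem_image.mpr ⟨s - 1 - j.val, Finset.mem_range.mpr (by omega), rfl⟩
    have huniq := Finset.orderEmbOfFin_unique hcard hmem hmono
    have h2 := congrFun huniq ⟨s - 1 - i, by omega⟩
    have heq : s - 1 - (s - 1 - i) = i := by omega
    calc g i + (s - 1 - i) = e ⟨s - 1 - i, by omega⟩ := by
          simp only [he, heq]
      _ = _ := h2
  funext i
  rcases Nat.lt_or_ge i s with his | his
  · have e1 := main g₁ ha1 hX1 i his
    have e2 := main g₂ ha2 hX2 i his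
    omega
  · rw [hz1 i his, hz2 i his]

/-- The `d`-core is well defined: starting from (a β-set `X` of) a partition, any two
maximal sequences of rim `d`-hook removals end at the same β-set, hence at the same
partition. -/
theorem stmt8 (d : ℕ) (hd : 1 ≤ d) (f : ℕ → ℕ) (s : ℕ) (X : Finset ℕ)
    (hf : HasBetaSet f s X) (Z₁ Z₂ : Finset ℕ)
    (h1 : Relation.ReflTransGen (HookStep d) X Z₁)
    (h2 : Relation.ReflTransGen (HookStep d) X Z₂)
    (t1 : ∀ W, ¬ HookStep d Z₁ W) (t2 : ∀ W, ¬ HookStep d Z₂ W) :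
    Z₁ = Z₂ ∧
      ∀ g₁ g₂ : ℕ → ℕ, HasBetaSet g₁ s Z₁ → HasBetaSet g₂ s Z₂ → g₁ = g₂ := by
  have hZeq : Z₁ = Z₂ := by
    apply Finset.ext
    intro x
    have hcard : (Z₁.filter (fun y => y % d = x % d)).card
        = (Z₂.filter (fun y => y % d = x % d)).card := by
      rw [rtg_filter_card d h1, rtg_filter_card d h2]
    have hr : x % d < d := Nat.mod_lt x (by omega)
    have e1 := terminal_filter_eq d Z₁ t1 (x % d) hr
    have e2 := terminal_filter_eq d Z₂ t2 (x % d) hr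
    constructor
    · intro hx
      have hx1 : x ∈ Z₁.filter (fun y => y % d = x % d) := Finset.mem_filter.mpr ⟨hx, rfl⟩
      rw [e1, hcard, ← e2] at hx1
      exact Finset.mem_of_mem_filter _ hx1
    · intro hx
      have hx2 : x ∈ Z₂.filter (fun y => y % d = x % d) := Finset.mem_filter.mpr ⟨hx, rfl⟩
      rw [e2, ← hcard, ← e1] at hx2
      exact Finset.mem_of_mem_filter _ hx2
  refine ⟨hZeq, fun g₁ g₂ hg₁ hg₂ => ?_⟩
  rw [← hZeq] at hg₂
  exact betaSet_unique s Z₁ g₁ g₂ hg₁ hg₂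
end

section
/- For integers n ≥ 1 and 2 ≤ d ≤ n+1, the word s_1 s_2 ⋯ s_{n−⌊d/2⌋} · s_n s_{n−1} ⋯ s_{⌊(d+1)/2⌋} is a reduced expression in S_{n+1}; that is, the permutation it represents has Coxeter length exactly (n − ⌊d/2⌋) + (n + 1 − ⌊(d+1)/2⌋) = 2n + 1 − d. -/
open Fin.NatCast in
lemma prod1 (n m : ℕ) (hm : m ≤ n) (x : Fin (n + 1)) :
    ((((List.range m).map
      (fun j => Equiv.swap ((j : ℕ) : Fin (n + 1)) ((j + 1 : ℕ) : Fin (n + 1)))).prod) x).val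
    = if x.val < m then x.val + 1 else if x.val = m then 0 else x.val := by
  induction m generalizing x with
  | zero =>
    simp only [List.range_zero, List.map_nil, List.prod_nil, Equiv.Perm.coe_one, id_eq]
    have := x.isLt
    split_ifs <;> omega
  | succ m ih =>
    rw [List.range_succ, List.map_append, List.prod_append]
    simp only [List.map_cons, List.map_nil, List.prod_cons, List.prod_nil, mul_one,
      Equiv.Perm.mul_apply]
    have hm' : m ≤ n := by omega
    have h1 : (((m : ℕ) : Fin (n+1))).val = m := Fin.val_cast_of_lt (by omega)
    have h2 : (((m + 1 : ℕ) : Fin (n+1))).val = m + 1 := Fin.val_cast_of_lt (by omega)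
    rw [ih hm', Equiv.swap_apply_def]
    have hx := x.isLt
    simp only [Fin.ext_iff, h1, h2]
    split_ifs <;> omega

open Fin.NatCast in
lemma prod2 (n m : ℕ) (hm : m ≤ n) (x : Fin (n + 1)) :
    ((((List.range m).map
      (fun j => Equiv.swap ((n - 1 - j : ℕ) : Fin (n + 1)) ((n - j : ℕ) : Fin (n + 1)))).prod) x).val
    = if x.val < n - m then x.val else if x.val = n - m then n else x.val - 1 := by
  induction m generalizing x with
  | zero =>
    simp only [List.range_zero, List.map_nil, List.prod_nil, Equiv.Perm.coe_one, id_eq]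
    have := x.isLt
    split_ifs <;> omega
  | succ m ih =>
    rw [List.range_succ, List.map_append, List.prod_append]
    simp only [List.map_cons, List.map_nil, List.prod_cons, List.prod_nil, mul_one,
      Equiv.Perm.mul_apply]
    have hm' : m ≤ n := by omega
    have h1 : (((n - 1 - m : ℕ) : Fin (n+1))).val = n - 1 - m := Fin.val_cast_of_lt (by omega)
    have h2 : (((n - m : ℕ) : Fin (n+1))).val = n - m := Fin.val_cast_of_lt (by omega)
    rw [ih hm', Equiv.swap_apply_def]
    have hx := x.isLt
    simp only [Fin.ext_iff, h1, h2]
    split_ifs <;> omega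


open Fin.NatCast in
/-- The element of `S_{n+1}` given by the word
`s_1 s_2 ⋯ s_{n-⌊d/2⌋} · s_n s_{n-1} ⋯ s_{⌊(d+1)/2⌋}`
(0-indexed on `Fin (n+1)`, `s_i = swap (i-1) i`; the group product is taken in the
order of the word). -/
def vWord (n d : ℕ) : Equiv.Perm (Fin (n + 1)) :=
  (((List.range (n - d / 2)).map
      (fun j => Equiv.swap ((j : ℕ) : Fin (n + 1)) ((j + 1 : ℕ) : Fin (n + 1)))) ++
    ((List.range (n + 1 - (d + 1) / 2)).map
      (fun j => Equiv.swap ((n - 1 - j : ℕ) : Fin (n + 1)) ((n - j : ℕ) : Fin (n + 1))))).prod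

/-- The number of inversions of a permutation, which equals its Coxeter length. -/
noncomputable def permLen {N : ℕ} (w : Equiv.Perm (Fin N)) : ℕ :=
  Set.ncard {p : Fin N × Fin N | p.1 < p.2 ∧ w p.2 < w p.1}

open Fin.NatCast in
lemma vWord_val (n d : ℕ) (hn : 1 ≤ n) (hd2 : 2 ≤ d) (hdn : d ≤ n + 1) (x : Fin (n + 1)) :
    ((vWord n d) x).val =
      if x.val < (d + 1) / 2 - 1 then x.val + 1
      else if x.val = (d + 1) / 2 - 1 then n
      else if x.val ≤ n - d / 2 then x.val
      else if x.val = n - d / 2 + 1 then 0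
      else x.val - 1 := by
  unfold vWord
  rw [List.prod_append, Equiv.Perm.mul_apply]
  have h2 := prod2 n (n + 1 - (d + 1) / 2) (by omega) x
  have h1 := prod1 n (n - d / 2) (by omega)
      ((((List.range (n + 1 - (d + 1) / 2)).map
      (fun j => Equiv.swap ((n - 1 - j : ℕ) : Fin (n + 1)) ((n - j : ℕ) : Fin (n + 1)))).prod) x)
  rw [h1, h2]
  have hx := x.isLt
  split_ifs <;> omega

/-- For `n ≥ 1` and `2 ≤ d ≤ n+1`, the word
`s_1 ⋯ s_{n-⌊d/2⌋} s_n ⋯ s_{⌊(d+1)/2⌋}` is reduced: the Coxeter length (= number of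
inversions) of the permutation it represents is exactly `2n + 1 - d`, the length of
the word. -/
theorem stmt18 (n d : ℕ) (hn : 1 ≤ n) (hd2 : 2 ≤ d) (hdn : d ≤ n + 1) :
    permLen (vWord n d) = 2 * n + 1 - d := by
  have hb1 : (d + 1) / 2 - 1 < n + 1 := by omega
  have hb : (d + 1) / 2 < n + 1 := by omega
  have hnn : n < n + 1 := by omega
  have ha : n - d / 2 < n + 1 := by omega
  have ha1 : n - d / 2 + 1 < n + 1 := by omega
  have hset : {p : Fin (n + 1) × Fin (n + 1) | p.1 < p.2 ∧ vWord n d p.2 < vWord n d p.1}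
      = ↑(((Finset.Icc (⟨(d + 1) / 2, hb⟩ : Fin (n+1)) ⟨n, hnn⟩).image
            fun j => ((⟨(d + 1) / 2 - 1, hb1⟩ : Fin (n+1)), j)) ∪
          (((Finset.Iic (⟨n - d / 2, ha⟩ : Fin (n+1))).erase ⟨(d + 1) / 2 - 1, hb1⟩).image
            fun i => (i, (⟨n - d / 2 + 1, ha1⟩ : Fin (n+1))))) := by
    ext ⟨i, j⟩
    have hi := i.isLt
    have hj := j.isLt
    simp only [Set.mem_setOf_eq, Finset.coe_union, Set.mem_union, Finset.mem_coe,
      Finset.mem_image, Finset.mem_union, Finset.mem_Icc, Finset.mem_erase, Finset.mem_Iic,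
      Prod.mk.injEq, ne_eq, Fin.lt_def, Fin.le_def, Fin.ext_iff,
      vWord_val n d hn hd2 hdn]
    constructor
    · rintro ⟨h1, h2⟩
      split_ifs at h2 <;>
        first
          | (left; exact ⟨j, ⟨by omega, by omega⟩, by omega, by omega⟩)
          | (right; exact ⟨i, ⟨by omega, by omega⟩, by omega, by omega⟩)
          | omega
    · rintro (⟨x, ⟨hx1, hx2⟩, hx3, hx4⟩ | ⟨x, ⟨hx1, hx2⟩, hx3, hx4⟩) <;>
        · refine ⟨by omega, ?_⟩
          split_ifs <;> omega
  rw [permLen, hset, Set.ncard_coe_finset]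
  rw [Finset.card_union_of_disjoint, Finset.card_image_of_injective, Finset.card_image_of_injective,
    Fin.card_Icc, Finset.card_erase_of_mem, Fin.card_Iic]
  · simp only []
    omega
  · simp only [Finset.mem_Iic, Fin.le_def]
    omega
  · intro a b h; simpa using h
  · intro a b h; simpa using h
  · rw [Finset.disjoint_left]
    rintro p hp1 hp2
    simp only [Finset.mem_image, Finset.mem_erase, Finset.mem_Icc, Finset.mem_Iic] at hp1 hp2
    obtain ⟨x, _, hx⟩ := hp1
    obtain ⟨y, ⟨hy1, _⟩, hy⟩ := hp2
    apply hy1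
    rw [← hy] at hx
    exact ((Prod.ext_iff.mp hx).1).symm
end

section
/- Let d ≥ 2, let μ be a partition with β-set X of size s, let x ∈ X with x + d ∉ X, and let λ = μ * x be the partition (of |μ| + d) with β-set Y = (X \ {x}) ∪ {x + d}. Then the partitions obtained from λ by removing one box are exactly those with β-set of one of the following forms: (i) (X \ {x}) ∪ {x + d − 1}, which occurs iff x + d − 1 ∉ X; (ii) (X \ {x+1}) ∪ {x + d}, which occurs iff x + 1 ∈ X; (iii) (X^{(j)} \ {x}) ∪ {x + d}, where X^{(j)} = (X \ {x_j}) ∪ {x_j − 1} for some x_j ∈ X with x_j ≥ 1, x_j − 1 ∉ X, x_j ≠ x and x_j ≠ x + d + 1. -/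
lemma beta_strictAnti {f : ℕ → ℕ} (hf : Antitone f) {s i j : ℕ}
    (hij : i < j) (hjs : j < s) :
    f j + (s - 1 - j) < f i + (s - 1 - i) := by
  have := hf hij.le
  omega

lemma eq_of_image_eq (s : ℕ) (b c : ℕ → ℕ)
    (hb : ∀ i j, i < j → j < s → b j < b i)
    (hc : ∀ i j, i < j → j < s → c j < c i)
    (h : (Finset.range s).image b = (Finset.range s).image c) :
    ∀ i < s, b i = c i := by
  induction s with
  | zero => intro i hi; omega
  | succ s ih =>
    have hbs : b s = c s := by
      have h1 : b s ∈ (Finset.range (s+1)).image c := by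
        rw [← h]; exact Finset.mem_image.2 ⟨s, by simp, rfl⟩
      have h2 : c s ∈ (Finset.range (s+1)).image b := by
        rw [h]; exact Finset.mem_image.2 ⟨s, by simp, rfl⟩
      obtain ⟨i, hi, hie⟩ := Finset.mem_image.1 h1
      obtain ⟨j, hj, hje⟩ := Finset.mem_image.1 h2
      simp only [Finset.mem_range] at hi hj
      have hcs : c s ≤ c i := by
        rcases eq_or_lt_of_le (Nat.lt_succ_iff.1 hi) with rfl | h' 
        · exact le_rfl
        · exact (hc i s h' (Nat.lt_succ_self s)).le
      have hbs' : b s ≤ b j := by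
        rcases eq_or_lt_of_le (Nat.lt_succ_iff.1 hj) with rfl | h' 
        · exact le_rfl
        · exact (hb j s h' (Nat.lt_succ_self s)).le
      omega
    have herb : (Finset.range s).image b = ((Finset.range (s+1)).image b).erase (b s) := by
      ext a
      simp only [Finset.mem_image, Finset.mem_erase, Finset.mem_range]
      constructor
      · rintro ⟨i, hi, rfl⟩
        exact ⟨(hb i s hi (Nat.lt_succ_self s)).ne', i, Nat.lt_succ_of_lt hi, rfl⟩
      · rintro ⟨hne', i, hi, rfl⟩
        rcases eq_or_lt_of_le (Nat.lt_succ_iff.1 hi) with rfl | h'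
        · exact absurd rfl hne'
        · exact ⟨i, h', rfl⟩
    have herc : (Finset.range s).image c = ((Finset.range (s+1)).image c).erase (c s) := by
      ext a
      simp only [Finset.mem_image, Finset.mem_erase, Finset.mem_range]
      constructor
      · rintro ⟨i, hi, rfl⟩
        exact ⟨(hc i s hi (Nat.lt_succ_self s)).ne', i, Nat.lt_succ_of_lt hi, rfl⟩
      · rintro ⟨hne', i, hi, rfl⟩
        rcases eq_or_lt_of_le (Nat.lt_succ_iff.1 hi) with rfl | h'
        · exact absurd rfl hne'
        · exact ⟨i, h', rfl⟩
    have him : (Finset.range s).image b = (Finset.range s).image c := by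
      rw [herb, herc, h, hbs]
    have IH := ih (fun i j hij hjs => hb i j hij (Nat.lt_succ_of_lt hjs))
      (fun i j hij hjs => hc i j hij (Nat.lt_succ_of_lt hjs)) him
    intro i hi
    rcases eq_or_lt_of_le (Nat.lt_succ_iff.1 hi) with rfl | h'
    · exact hbs
    · exact IH i h'

lemma hasBetaSet_unique {g g' : ℕ → ℕ} {s : ℕ} {Z : Finset ℕ}
    (hg : HasBetaSet g s Z) (hg' : HasBetaSet g' s Z) : g = g' := by
  funext i
  by_cases hi : i < s
  · have := eq_of_image_eq s (fun i => g i + (s - 1 - i)) (fun i => g' i + (s - 1 - i))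
      (fun i j hij hjs => beta_strictAnti hg.1.1 hij hjs)
      (fun i j hij hjs => beta_strictAnti hg'.1.1 hij hjs)
      (hg.2.2.symm.trans hg'.2.2) i hi
    have h2 : g i + (s - 1 - i) = g' i + (s - 1 - i) := this
    omega
  · rw [hg.2.1 i (by omega), hg'.2.1 i (by omega)]

lemma image_update {f g : ℕ → ℕ} {s i0 : ℕ} (hf : Antitone f) (hi0 : i0 < s)
    (hfg : ∀ j, j ≠ i0 → f j = g j) (hstep : f i0 = g i0 + 1) :
    (Finset.range s).image (fun i => g i + (s - 1 - i)) =
      insert (f i0 + (s - 1 - i0) - 1)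
        (((Finset.range s).image (fun i => f i + (s - 1 - i))).erase (f i0 + (s - 1 - i0))) := by
  ext a
  simp only [Finset.mem_image, Finset.mem_insert, Finset.mem_erase, Finset.mem_range]
  constructor
  · rintro ⟨i, hi, rfl⟩
    by_cases h : i = i0
    · subst h; left; omega
    · right
      have hfi := hfg i h
      refine ⟨?_, i, hi, by omega⟩
      rcases lt_or_gt_of_ne h with hlt | hgt
      · have := beta_strictAnti hf hlt hi0
        omega
      · have := beta_strictAnti hf hgt hi
        omega
  · rintro (rfl | ⟨hne', i, hi, rfl⟩)
    · exact ⟨i0, hi0, show g i0 + (s - 1 - i0) = f i0 + (s - 1 - i0) - 1 by omega⟩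
    · have h : i ≠ i0 := by rintro rfl; exact hne' rfl
      exact ⟨i, hi, show g i + (s - 1 - i) = f i + (s - 1 - i) by rw [← hfg i h]⟩

lemma removeBox_iff_beta {f : ℕ → ℕ} {s : ℕ} {X : Finset ℕ} (hf : HasBetaSet f s X)
    (g : ℕ → ℕ) :
    RemoveBox f g ↔ ∃ y ∈ X, 1 ≤ y ∧ y - 1 ∉ X ∧
      HasBetaSet g s (insert (y - 1) (X.erase y)) := by
  obtain ⟨hfp, hf0, hXeq⟩ := hf
  constructor
  · rintro ⟨hgp, i0, hstep, hsame⟩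
    have hi0 : i0 < s := by
      by_contra h
      have := hf0 i0 (by omega)
      omega
    refine ⟨f i0 + (s - 1 - i0), ?_, by omega, ?_, hgp, ?_, ?_⟩
    · rw [hXeq]; exact Finset.mem_image.2 ⟨i0, Finset.mem_range.2 hi0, rfl⟩
    · -- y - 1 ∉ X
      rw [hXeq]
      intro hmem
      obtain ⟨j, hj, hje⟩ := Finset.mem_image.1 hmem
      simp only [Finset.mem_range] at hj
      have hje' : f j + (s - 1 - j) = f i0 + (s - 1 - i0) - 1 := hje
      rcases lt_trichotomy j i0 with hlt | rfl | hgt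
      · have := beta_strictAnti hfp.1 hlt hi0
        omega
      · omega
      · have h1 : g j ≤ g i0 := hgp.1 hgt.le
        have h2 : f j = g j := hsame j (by omega)
        omega
    · -- vanishing beyond s
      intro i hi
      rw [← hsame i (by omega)]
      exact hf0 i hi
    · -- image equality
      rw [hXeq, image_update hfp.1 hi0 hsame hstep]
  · rintro ⟨y, hyX, hy1, hyn, hgZ⟩
    rw [hXeq] at hyX
    obtain ⟨i0, hi0, hbi0⟩ := Finset.mem_image.1 hyX
    simp only [Finset.mem_range] at hi0
    have hbi0' : f i0 + (s - 1 - i0) = y := hbi0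
    have hkey : i0 + 1 < s → f (i0 + 1) + 1 ≤ f i0 := by
      intro hlt
      by_contra hcon
      have hle : f (i0 + 1) ≤ f i0 := hfp.1 (by omega)
      have heq : f (i0 + 1) = f i0 := by omega
      apply hyn
      rw [hXeq]
      exact Finset.mem_image.2 ⟨i0 + 1, Finset.mem_range.2 hlt, by omega⟩
    have hf1 : 1 ≤ f i0 := by
      rcases Nat.lt_or_ge (i0 + 1) s with hlt | hge
      · have := hkey hlt; omega
      · omega
    set g' : ℕ → ℕ := fun j => if j = i0 then f i0 - 1 else f j with hg'def
    have hsame : ∀ j, j ≠ i0 → f j = g' j := by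
      intro j hj; simp [hg'def, hj]
    have hstep : f i0 = g' i0 + 1 := by simp [hg'def]; omega
    have hg'p : IsPartition g' := by
      constructor
      · apply antitone_nat_of_succ_le
        intro n
        by_cases h1 : n + 1 = i0
        · subst h1
          have hv : g' (n + 1) = f (n + 1) - 1 := by simp [hg'def]
          have hne2 : n ≠ n + 1 := by omega
          have h2 : g' n = f n := by simp [hg'def, hne2]
          have h3 : f (n + 1) ≤ f n := hfp.1 (by omega)
          omega
        · by_cases h2 : n = i0
          · subst h2
            have hgn : g' n = f n - 1 := by simp [hg'def]
            have hgn1 : g' (n + 1) = f (n + 1) := by simp [hg'def, h1]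
            rcases Nat.lt_or_ge (n + 1) s with hlt | hge
            · have := hkey hlt; omega
            · have := hf0 (n + 1) hge; omega
          · have hgn : g' n = f n := by simp [hg'def, h2]
            have hgn1 : g' (n + 1) = f (n + 1) := by simp [hg'def, h1]
            have h3 : f (n + 1) ≤ f n := hfp.1 (by omega)
            omega
      · exact ⟨s, fun i hi => by
          have : i ≠ i0 := by omega
          simp [hg'def, this, hf0 i hi]⟩
    have hg'0 : ∀ i, s ≤ i → g' i = 0 := fun i hi => by
      have : i ≠ i0 := by omega
      simp [hg'def, this, hf0 i hi]
    have himg : HasBetaSet g' s (insert (y - 1) (X.erase y)) := by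
      refine ⟨hg'p, hg'0, ?_⟩
      rw [image_update hfp.1 hi0 hsame hstep, hbi0', hXeq]
    have hgg' : g = g' := hasBetaSet_unique hgZ himg
    refine ⟨hgZ.1, i0, ?_, ?_⟩
    · rw [hgg']; exact hstep
    · intro j hj; rw [hgg']; exact hsame j hj

/-- Let `d ≥ 2`, `μ` a partition with β-set `X` of size `s`, `x ∈ X` with `x + d ∉ X`,
and `λ = μ * x` the partition with β-set `Y = (X \ {x}) ∪ {x + d}`.  The partitions
obtained from `λ` by removing one box are exactly those whose β-set of size `s` is:
(i) `(X \ {x}) ∪ {x+d-1}`, occurring iff `x + d - 1 ∉ X`;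
(ii) `(X \ {x+1}) ∪ {x+d}`, occurring iff `x + 1 ∈ X`;
(iii) `(X⁽ʲ⁾ \ {x}) ∪ {x+d}` where `X⁽ʲ⁾ = (X \ {x_j}) ∪ {x_j - 1}` for some `x_j ∈ X`
with `x_j ≥ 1`, `x_j - 1 ∉ X`, `x_j ≠ x`, `x_j ≠ x + d + 1`. -/
theorem stmt19 (d : ℕ) (hd : 2 ≤ d) (mu : ℕ → ℕ) (s : ℕ) (X : Finset ℕ)
    (hmu : HasBetaSet mu s X) (x : ℕ) (hx : x ∈ X) (hxd : x + d ∉ X)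
    (lam : ℕ → ℕ) (hlam : HasBetaSet lam s (insert (x + d) (X.erase x))) :
    ∀ g : ℕ → ℕ, RemoveBox lam g ↔
      ∃ Z : Finset ℕ, HasBetaSet g s Z ∧
        ((x + d - 1 ∉ X ∧ Z = insert (x + d - 1) (X.erase x)) ∨
         (x + 1 ∈ X ∧ Z = insert (x + d) (X.erase (x + 1))) ∨
         (∃ xj ∈ X, 1 ≤ xj ∧ xj - 1 ∉ X ∧ xj ≠ x ∧ xj ≠ x + d + 1 ∧
            Z = insert (x + d) ((insert (xj - 1) (X.erase xj)).erase x))) := by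
  intro g
  rw [removeBox_iff_beta hlam g]
  have e1 : (insert (x + d) (X.erase x)).erase (x + d) = X.erase x := by
    apply Finset.erase_insert
    intro h
    exact hxd (Finset.mem_of_mem_erase h)
  have e2 : insert x ((insert (x + d) (X.erase x)).erase (x + 1)) =
      insert (x + d) (X.erase (x + 1)) := by
    ext a
    simp only [Finset.mem_insert, Finset.mem_erase]
    constructor
    · rintro (rfl | ⟨h1, (rfl | ⟨h2, h3⟩)⟩)
      · exact Or.inr ⟨by omega, hx⟩
      · exact Or.inl rfl
      · exact Or.inr ⟨h1, h3⟩
    · rintro (rfl | ⟨h1, h2⟩)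
      · exact Or.inr ⟨by omega, Or.inl rfl⟩
      · by_cases hax : a = x
        · exact Or.inl hax
        · exact Or.inr ⟨h1, Or.inr ⟨hax, h2⟩⟩
  have e3 : ∀ y, y ∈ X → 1 ≤ y → y - 1 ∉ X → y ≠ x →
      insert (y - 1) ((insert (x + d) (X.erase x)).erase y) =
        insert (x + d) ((insert (y - 1) (X.erase y)).erase x) := by
    intro y hyX hy1 hyn1 hyx
    have hyxd : y ≠ x + d := fun he => hxd (he ▸ hyX)
    have hy1x : y - 1 ≠ x := fun he => hyn1 (he ▸ hx)
    ext a
    simp only [Finset.mem_insert, Finset.mem_erase]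
    constructor
    · rintro (rfl | ⟨h1, (rfl | ⟨h2, h3⟩)⟩)
      · exact Or.inr ⟨hy1x, Or.inl rfl⟩
      · exact Or.inl rfl
      · exact Or.inr ⟨h2, Or.inr ⟨h1, h3⟩⟩
    · rintro (rfl | ⟨h1, (rfl | ⟨h2, h3⟩)⟩)
      · exact Or.inr ⟨fun he => hyxd he.symm, Or.inl rfl⟩
      · exact Or.inl rfl
      · exact Or.inr ⟨h2, Or.inr ⟨h1, h3⟩⟩
  constructor
  · rintro ⟨y, hyY, hy1, hynY, hg⟩
    refine ⟨insert (y - 1) ((insert (x + d) (X.erase x)).erase y), hg, ?_⟩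
    simp only [Finset.mem_insert, Finset.mem_erase] at hyY
    rcases hyY with rfl | ⟨hyx, hyX⟩
    · -- case (i): y = x + d
      left
      have h1 : x + d - 1 ∉ X := fun hmem =>
        hynY (Finset.mem_insert.2 (Or.inr (Finset.mem_erase.2 ⟨by omega, hmem⟩)))
      exact ⟨h1, by rw [e1]⟩
    · by_cases hcase : y - 1 = x
      · -- case (ii): y = x + 1
        right; left
        have hy : y = x + 1 := by omega
        subst hy
        refine ⟨hyX, ?_⟩
        rw [Nat.add_sub_cancel]
        exact e2
      · -- case (iii)
        right; right
        have h5 : y - 1 ∉ X := fun hmem =>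
          hynY (Finset.mem_insert.2 (Or.inr (Finset.mem_erase.2 ⟨hcase, hmem⟩)))
        have h6 : y - 1 ≠ x + d := fun he =>
          hynY (by rw [he]; exact Finset.mem_insert_self _ _)
        exact ⟨y, hyX, hy1, h5, hyx, by omega, e3 y hyX hy1 h5 hyx⟩
  · rintro ⟨Z, hg, (⟨h1, rfl⟩ | ⟨h1, rfl⟩ | ⟨xj, hxjX, hxj1, hxj1n, hxjx, hxjd, rfl⟩)⟩
    · -- case (i)
      refine ⟨x + d, Finset.mem_insert_self _ _, by omega, ?_, ?_⟩
      · intro h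
        rcases Finset.mem_insert.1 h with h' | h'
        · omega
        · exact h1 (Finset.mem_of_mem_erase h')
      · rw [e1]; exact hg
    · -- case (ii)
      refine ⟨x + 1, ?_, by omega, ?_, ?_⟩
      · exact Finset.mem_insert.2 (Or.inr (Finset.mem_erase.2 ⟨by omega, h1⟩))
      · rw [Nat.add_sub_cancel]
        intro h
        rcases Finset.mem_insert.1 h with h' | h'
        · omega
        · exact (Finset.mem_erase.1 h').1 rfl
      · rw [Nat.add_sub_cancel, e2]; exact hg
    · -- case (iii)
      refine ⟨xj, ?_, hxj1, ?_, ?_⟩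
      · exact Finset.mem_insert.2 (Or.inr (Finset.mem_erase.2 ⟨hxjx, hxjX⟩))
      · intro h
        rcases Finset.mem_insert.1 h with h' | h'
        · omega
        · exact hxj1n (Finset.mem_of_mem_erase h')
      · rw [e3 xj hxjX hxj1 hxj1n hxjx]; exact hg
end
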